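/- arXiv:0802.2159 — 6 statements merged into one kernel-verified Lean document; each statement's English description precedes it below -/
import Mathlib

section
/- Let N be a finite nonempty player set, let P̃ > 0 be a real power constraint, let cost : Finset N → ℝ be a cost function, and let C : Finset N → ℝ satisfy C(S) > 0 for every nonempty S. Define the coalitional value v(S) = |S| · C(S) if cost(S) < P̃, and v(S) = 0 otherwise. If there exist two disjoint nonempty coalitions S₁, S₂ ⊆ N with cost(S₁) < P̃, cost(S₂) < P̃, and cost(S₁ ∪ S₂) ≥ P̃, then v(S₁ ∪ S₂) < v(S₁) + v(S₂); in particular, the game v is not superadditive. -/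
/-- **Non-superadditivity of the transmitter cooperation game with cost.**
Let `N` be a finite nonempty player set, `Pt > 0` a power constraint, `cost` a cost
function on coalitions, and `C S > 0` for every nonempty coalition `S`. The value is
`v S = |S| * C S` if `cost S < Pt`, and `v S = 0` otherwise. If there are two disjoint
nonempty coalitions `S₁, S₂` with `cost S₁ < Pt`, `cost S₂ < Pt` and `cost (S₁ ∪ S₂) ≥ Pt`,
then `v (S₁ ∪ S₂) < v S₁ + v S₂`; in particular `v` is not superadditive. -/
theorem transmitter_game_not_superadditive
    {N : Type*} [Fintype N] [DecidableEq N] [Nonempty N]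
    (Pt : ℝ) (hPt : 0 < Pt)
    (cost C : Finset N → ℝ)
    (hC : ∀ S : Finset N, S.Nonempty → 0 < C S)
    (v : Finset N → ℝ)
    (hv : ∀ S : Finset N, v S = if cost S < Pt then (S.card : ℝ) * C S else 0)
    (S₁ S₂ : Finset N) (hS₁ : S₁.Nonempty) (hS₂ : S₂.Nonempty)
    (hdisj : Disjoint S₁ S₂)
    (hc₁ : cost S₁ < Pt) (hc₂ : cost S₂ < Pt)
    (hc₁₂ : Pt ≤ cost (S₁ ∪ S₂)) :
    v (S₁ ∪ S₂) < v S₁ + v S₂ ∧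
      ¬ (∀ A B : Finset N, Disjoint A B → v A + v B ≤ v (A ∪ B)) := by
  have h1 : v S₁ = (S₁.card : ℝ) * C S₁ := by rw [hv]; simp [hc₁]
  have h2 : v S₂ = (S₂.card : ℝ) * C S₂ := by rw [hv]; simp [hc₂]
  have h12 : v (S₁ ∪ S₂) = 0 := by rw [hv]; simp [not_lt.2 hc₁₂]
  have p1 : 0 < v S₁ := by
    rw [h1]; exact mul_pos (by exact_mod_cast Finset.card_pos.2 hS₁) (hC _ hS₁)
  have p2 : 0 < v S₂ := by
    rw [h2]; exact mul_pos (by exact_mod_cast Finset.card_pos.2 hS₂) (hC _ hS₂)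
  have key : v (S₁ ∪ S₂) < v S₁ + v S₂ := by rw [h12]; linarith
  exact ⟨key, fun h => absurd (h S₁ S₂ hdisj) (not_le.2 key)⟩
end

section
/- Let v : Finset N → ℝ be a TU coalitional game on a finite nonempty player set N. There is no infinite sequence P₀, P₁, P₂, … of partitions of N in which each P_{t+1} is obtained from P_t by an applicable merge rule or an applicable split rule; that is, every iteration of successive arbitrary merge and split operations terminates. -/
variable {N : Type*} [Fintype N] [DecidableEq N]

/-- `P` is a partition of the player set `N`: a finite collection of pairwise disjoint
nonempty coalitions whose union is `N`. -/
def IsPartition (P : Finset (Finset N)) : Prop :=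
  (∀ S ∈ P, S.Nonempty) ∧
  (P : Set (Finset N)).PairwiseDisjoint id ∧
  P.sup id = Finset.univ

/-- The merge rule: replace coalitions `S₁, …, S_k ∈ P` (`k ≥ 2`) by their union,
applicable when `∑ⱼ v(Sⱼ) < v(⋃ⱼ Sⱼ)`. -/
def MergeStep (v : Finset N → ℝ) (P P' : Finset (Finset N)) : Prop :=
  ∃ F : Finset (Finset N), F ⊆ P ∧ 2 ≤ F.card ∧
    (∑ S ∈ F, v S) < v (F.sup id) ∧
    P' = (P \ F) ∪ {F.sup id}

/-- The split rule: replace a coalition `⋃ⱼ Sⱼ ∈ P` by pairwise disjoint nonempty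
coalitions `S₁, …, S_k` (`k ≥ 2`), applicable when `∑ⱼ v(Sⱼ) > v(⋃ⱼ Sⱼ)`. -/
def SplitStep (v : Finset N → ℝ) (P P' : Finset (Finset N)) : Prop :=
  ∃ U ∈ P, ∃ F : Finset (Finset N), 2 ≤ F.card ∧
    (∀ S ∈ F, S.Nonempty) ∧
    (F : Set (Finset N)).PairwiseDisjoint id ∧
    F.sup id = U ∧
    v U < ∑ S ∈ F, v S ∧
    P' = (P \ {U}) ∪ F

lemma merge_incr (v : Finset N → ℝ) {P P' : Finset (Finset N)} (hP : IsPartition P)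
    (h : MergeStep v P P') : ∑ S ∈ P, v S < ∑ S ∈ P', v S := by
  obtain ⟨F, hFP, hcard, hlt, hP'⟩ := h
  have hne : ∀ S ∈ F, S.Nonempty := fun S hS => hP.1 S (hFP hS)
  have hsupnot : F.sup id ∉ P \ F := by
    intro hmem
    obtain ⟨S, hS⟩ := Finset.card_pos.mp (by omega : 0 < F.card)
    have hmemP : F.sup id ∈ P := (Finset.mem_sdiff.mp hmem).1
    have hnotF : F.sup id ∉ F := (Finset.mem_sdiff.mp hmem).2
    have hne' : S ≠ F.sup id := fun e => hnotF (e ▸ hS)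
    have hd : Disjoint S (F.sup id) := hP.2.1 (hFP hS) hmemP hne'
    have hle : S ≤ F.sup id := Finset.le_sup (f := id) hS
    exact (hne S hS).ne_empty (hd.eq_bot_of_le hle)
  have hsum := Finset.sum_sdiff (f := v) hFP
  rw [hP', Finset.sum_union (Finset.disjoint_singleton_right.mpr hsupnot),
    Finset.sum_singleton]
  linarith

lemma split_incr (v : Finset N → ℝ) {P P' : Finset (Finset N)} (hP : IsPartition P)
    (h : SplitStep v P P') : ∑ S ∈ P, v S < ∑ S ∈ P', v S := by
  obtain ⟨U, hU, F, hcard, hne, hdisj, hsup, hlt, hP'⟩ := h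
  have hdis : Disjoint (P \ {U}) F := by
    rw [Finset.disjoint_right]
    intro S hS hmem
    have hSP : S ∈ P := (Finset.mem_sdiff.mp hmem).1
    have hneU : S ≠ U := by
      have := (Finset.mem_sdiff.mp hmem).2
      simpa using this
    have hd : Disjoint S U := hP.2.1 hSP hU hneU
    have hle : S ≤ U := hsup ▸ Finset.le_sup (f := id) hS
    exact (hne S hS).ne_empty (hd.eq_bot_of_le hle)
  have hUs : {U} ⊆ P := Finset.singleton_subset_iff.mpr hU
  have hsum := Finset.sum_sdiff (f := v) hUs
  rw [Finset.sum_singleton] at hsum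
  rw [hP', Finset.sum_union hdis]
  linarith

/-- **Termination of merge-and-split iterations.** For a TU coalitional game `v` on a
finite nonempty player set `N`, there is no infinite sequence of partitions of `N` in
which each partition is obtained from the previous one by an applicable merge rule or an
applicable split rule. -/
theorem merge_split_terminates [Nonempty N]
    (v : Finset N → ℝ) (hv0 : v ∅ = 0) :
    ¬ ∃ P : ℕ → Finset (Finset N),
        (∀ t, IsPartition (P t)) ∧
        (∀ t, MergeStep v (P t) (P (t + 1)) ∨ SplitStep v (P t) (P (t + 1))) := by
  rintro ⟨P, hpart, hstep⟩
  have mono : StrictMono (fun t => ∑ S ∈ P t, v S) := by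
    apply strictMono_nat_of_lt_succ
    intro t
    rcases hstep t with h | h
    · exact merge_incr v (hpart t) h
    · exact split_incr v (hpart t) h
  have hinj : Function.Injective P := fun a b hab => mono.injective (by rw [hab])
  exact not_injective_infinite_finite P hinj
end

section
/- Let v : Finset N → ℝ be a TU coalitional game on a finite nonempty player set N. For every initial partition P₀ of N, there exists a finite sequence P₀, P₁, …, P_m of partitions of N, each obtained from the previous one by an applicable merge rule or an applicable split rule, such that no merge rule and no split rule is applicable to the final partition P_m. -/
variable {N : Type*} [Fintype N] [DecidableEq N]

lemma step_good {v : Finset N → ℝ} {P P' : Finset (Finset N)}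
    (hP : IsPartition P) (h : MergeStep v P P' ∨ SplitStep v P P') :
    IsPartition P' ∧ ∑ S ∈ P, v S < ∑ S ∈ P', v S := by
  obtain ⟨hne, hdisj, hsup⟩ := hP
  rcases h with ⟨F, hFP, hcard, hlt, rfl⟩ | ⟨U, hU, F, hcard, hFne, hFdisj, hFsup, hlt, rfl⟩
  · have hFne' : F.Nonempty := Finset.card_pos.mp (by omega)
    have hsupnot : F.sup id ∉ P \ F := by
      intro hmem
      obtain ⟨hmemP, hmemF⟩ := Finset.mem_sdiff.mp hmem
      obtain ⟨S, hS⟩ := hFne'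
      have hSP : S ∈ P := hFP hS
      have hne' : S ≠ F.sup id := fun h => hmemF (h ▸ hS)
      have hd : Disjoint S (F.sup id) := hdisj hSP hmemP hne'
      have hle : S ≤ F.sup id := Finset.le_sup (f := id) hS
      have : S = ⊥ := hd.eq_bot_of_le hle
      exact (hne S hSP).ne_empty this
    have hdisjsets : Disjoint (P \ F) ({F.sup id} : Finset (Finset N)) :=
      Finset.disjoint_singleton_right.mpr hsupnot
    constructor
    · refine ⟨?_, ?_, ?_⟩
      · intro S hS
        rcases Finset.mem_union.mp hS with h1 | h1
        · exact hne S (Finset.mem_sdiff.mp h1).1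
        · obtain ⟨T, hT⟩ := hFne'
          have := Finset.mem_singleton.mp h1
          subst this
          exact (hne T (hFP hT)).mono (Finset.le_sup hT)
      · intro a ha b hb hab
        simp only [Finset.coe_union, Set.mem_union, Finset.coe_sdiff, Set.mem_diff,
          Finset.mem_coe, Finset.coe_singleton, Set.mem_singleton_iff] at ha hb
        have key : ∀ c ∈ P, c ∉ F → Disjoint c (F.sup id) := by
          intro c hc hcF
          rw [Finset.disjoint_sup_right]
          intro i hi
          exact hdisj hc (hFP hi) (fun h => hcF (h ▸ hi))
        rcases ha with ⟨haP, haF⟩ | rfl <;> rcases hb with ⟨hbP, hbF⟩ | rfl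
        · exact hdisj haP hbP hab
        · exact key a haP haF
        · exact (key b hbP hbF).symm
        · exact absurd rfl hab
      · rw [Finset.sup_union, Finset.sup_singleton]
        have : P.sup id = (P \ F).sup id ⊔ F.sup id := by
          rw [← Finset.sup_union, Finset.sdiff_union_of_subset hFP]
        rw [show (id (F.sup id) : Finset N) = F.sup id from rfl, ← this, hsup]
    · rw [Finset.sum_union hdisjsets, Finset.sum_singleton]
      have hsum : ∑ S ∈ P \ F, v S + ∑ S ∈ F, v S = ∑ S ∈ P, v S :=
        Finset.sum_sdiff hFP
      linarith
  · -- split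
    have hUne : U.Nonempty := hne U hU
    have hFdisjP : Disjoint (P \ {U}) F := by
      rw [Finset.disjoint_left]
      intro S hS hSF
      obtain ⟨hSP, hSU⟩ := Finset.mem_sdiff.mp hS
      have hSU' : S ≠ U := fun h => hSU (Finset.mem_singleton.mpr h)
      have hd : Disjoint S U := hdisj hSP hU hSU'
      have hle : S ≤ U := hFsup ▸ Finset.le_sup (f := id) hSF
      exact (hFne S hSF).ne_empty (hd.eq_bot_of_le hle)
    constructor
    · refine ⟨?_, ?_, ?_⟩
      · intro S hS
        rcases Finset.mem_union.mp hS with h1 | h1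
        · exact hne S (Finset.mem_sdiff.mp h1).1
        · exact hFne S h1
      · intro a ha b hb hab
        simp only [Finset.coe_union, Set.mem_union, Finset.coe_sdiff, Set.mem_diff,
          Finset.mem_coe, Finset.coe_singleton, Set.mem_singleton_iff] at ha hb
        have key : ∀ c ∈ P, c ≠ U → ∀ d ∈ F, Disjoint c d := by
          intro c hc hcU d hd
          have h1 : Disjoint c U := hdisj hc hU hcU
          exact h1.mono_right (hFsup ▸ Finset.le_sup (f := id) hd)
        rcases ha with ⟨haP, haU⟩ | haF <;> rcases hb with ⟨hbP, hbU⟩ | hbF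
        · exact hdisj haP hbP hab
        · exact key a haP haU b hbF
        · exact (key b hbP hbU a haF).symm
        · exact hFdisj haF hbF hab
      · rw [Finset.sup_union, hFsup]
        have : P.sup id = (P \ {U}).sup id ⊔ ({U} : Finset (Finset N)).sup id := by
          rw [← Finset.sup_union, Finset.sdiff_union_of_subset (Finset.singleton_subset_iff.mpr hU)]
        rw [Finset.sup_singleton, show (id U : Finset N) = U from rfl] at this
        rw [← this, hsup]
    · rw [Finset.sum_union hFdisjP]
      have hsum : ∑ S ∈ P \ {U}, v S + ∑ S ∈ {U}, v S = ∑ S ∈ P, v S :=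
        Finset.sum_sdiff (Finset.singleton_subset_iff.mpr hU)
      rw [Finset.sum_singleton] at hsum
      linarith

/-- **Reachability of a terminal partition.** For a TU coalitional game `v` on a finite
nonempty player set `N` and any initial partition `P₀` of `N`, there is a finite sequence
`P₀, P₁, …, P_m` of partitions of `N`, each obtained from the previous one by an
applicable merge rule or an applicable split rule, such that no merge rule and no split
rule is applicable to the final partition `P_m`. -/
theorem merge_split_reaches_terminal [Nonempty N]
    (v : Finset N → ℝ) (hv0 : v ∅ = 0)
    (P₀ : Finset (Finset N)) (hP₀ : IsPartition P₀) :
    ∃ (m : ℕ) (P : ℕ → Finset (Finset N)),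
      P 0 = P₀ ∧
      (∀ t ≤ m, IsPartition (P t)) ∧
      (∀ t < m, MergeStep v (P t) (P (t + 1)) ∨ SplitStep v (P t) (P (t + 1))) ∧
      (∀ Q : Finset (Finset N), ¬ MergeStep v (P m) Q ∧ ¬ SplitStep v (P m) Q) := by
  classical
  suffices H : ∀ k (p : Finset (Finset N)), IsPartition p →
      (Finset.univ.filter (fun Q => IsPartition Q ∧ ∑ S ∈ p, v S < ∑ S ∈ Q, v S)).card ≤ k →
      ∃ (m : ℕ) (P : ℕ → Finset (Finset N)),
        P 0 = p ∧ (∀ t ≤ m, IsPartition (P t)) ∧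
        (∀ t < m, MergeStep v (P t) (P (t + 1)) ∨ SplitStep v (P t) (P (t + 1))) ∧
        (∀ Q : Finset (Finset N), ¬ MergeStep v (P m) Q ∧ ¬ SplitStep v (P m) Q) by
    exact H _ P₀ hP₀ le_rfl
  intro k
  induction k with
  | zero =>
    intro p hp hcard
    by_cases hterm : ∀ Q, ¬ MergeStep v p Q ∧ ¬ SplitStep v p Q
    · exact ⟨0, fun _ => p, rfl, fun t _ => hp, fun t ht => absurd ht (Nat.not_lt_zero t), hterm⟩
    · exfalso
      have hstep : ∃ Q, MergeStep v p Q ∨ SplitStep v p Q := by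
        by_contra hc
        push_neg at hc
        exact hterm fun Q => hc Q
      obtain ⟨Q, hQ⟩ := hstep
      obtain ⟨hQp, hQΦ⟩ := step_good hp hQ
      have : Q ∈ Finset.univ.filter
          (fun Q => IsPartition Q ∧ ∑ S ∈ p, v S < ∑ S ∈ Q, v S) := by
        simp [hQp, hQΦ]
      have := Finset.card_pos.mpr ⟨Q, this⟩
      omega
  | succ k ih =>
    intro p hp hcard
    by_cases hterm : ∀ Q, ¬ MergeStep v p Q ∧ ¬ SplitStep v p Q
    · exact ⟨0, fun _ => p, rfl, fun t _ => hp, fun t ht => absurd ht (Nat.not_lt_zero t), hterm⟩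
    · have hstep : ∃ Q, MergeStep v p Q ∨ SplitStep v p Q := by
        by_contra hc
        push_neg at hc
        exact hterm fun Q => hc Q
      obtain ⟨Q, hQ⟩ := hstep
      obtain ⟨hQp, hQΦ⟩ := step_good hp hQ
      have hQmem : Q ∈ Finset.univ.filter
          (fun R => IsPartition R ∧ ∑ S ∈ p, v S < ∑ S ∈ R, v S) := by
        simp [hQp, hQΦ]
      have hss : Finset.univ.filter (fun R => IsPartition R ∧ ∑ S ∈ Q, v S < ∑ S ∈ R, v S)
          ⊂ Finset.univ.filter (fun R => IsPartition R ∧ ∑ S ∈ p, v S < ∑ S ∈ R, v S) := by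
        constructor
        · intro R hR
          simp only [Finset.mem_filter, Finset.mem_univ, true_and] at hR ⊢
          exact ⟨hR.1, hQΦ.trans hR.2⟩
        · intro hsub
          have := hsub hQmem
          simp only [Finset.mem_filter, Finset.mem_univ, true_and] at this
          exact lt_irrefl _ this.2
      have hcard' : (Finset.univ.filter
          (fun R => IsPartition R ∧ ∑ S ∈ Q, v S < ∑ S ∈ R, v S)).card ≤ k := by
        have := Finset.card_lt_card hss
        omega
      obtain ⟨m, P, hP0, hpart, hsteps, hterm'⟩ := ih Q hQp hcard'
      refine ⟨m + 1, fun t => if t = 0 then p else P (t - 1), by simp, ?_, ?_, ?_⟩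
      · intro t ht
        cases t with
        | zero => simpa using hp
        | succ s => simpa using hpart s (by omega)
      · intro t ht
        cases t with
        | zero => simpa [hP0] using hQ
        | succ s => simpa using hsteps s (by omega)
      · simpa using hterm'
end

section
/- Let v : Finset N → ℝ be a TU coalitional game on a finite nonempty player set N, and let T = {T₁, …, T_l} be a partition of N satisfying: (i) for each i and each pair of disjoint nonempty coalitions S₁, S₂ with S₁ ∪ S₂ ⊆ T_i, v(S₁ ∪ S₂) > v(S₁) + v(S₂); and (ii) for every T-incompatible coalition G, ∑_{i=1}^l v(T_i ∩ G) > v(G). Then no merge rule and no split rule is applicable to T; in particular T is stable under merge-and-split operations. -/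
variable {N : Type*} [Fintype N] [DecidableEq N]

/-- A coalition `G` is `T`-incompatible for a partition `T` if `G` is contained in no
member of `T`. -/
def Incompatible (T : Finset (Finset N)) (G : Finset N) : Prop :=
  ∀ Ti ∈ T, ¬ G ⊆ Ti

/-- Superadditivity within `Ti` gives `∑ ≤ v(sup)` for nonempty disjoint families. -/
lemma aux_sum_le_sup (v : Finset N → ℝ) (Ti : Finset N)
    (h : ∀ S₁ S₂ : Finset N, S₁.Nonempty → S₂.Nonempty →
      Disjoint S₁ S₂ → S₁ ∪ S₂ ⊆ Ti → v S₁ + v S₂ < v (S₁ ∪ S₂)) :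
    ∀ F : Finset (Finset N), F.Nonempty → (∀ S ∈ F, S.Nonempty) →
      (F : Set (Finset N)).PairwiseDisjoint id → F.sup id ⊆ Ti →
      ∑ S ∈ F, v S ≤ v (F.sup id) := by
  intro F
  induction F using Finset.induction_on with
  | empty => intro hne; exact absurd hne (by simp)
  | @insert a s ha ih =>
    intro _ hall hdisj hsub
    by_cases hs : s.Nonempty
    · have hsup : (insert a s).sup id = a ∪ s.sup id := by
        rw [Finset.sup_insert]; rfl
      have hd : Disjoint a (s.sup id) := by
        rw [Finset.disjoint_sup_right]
        intro b hb
        exact hdisj (by simp) (by simp [hb]) (fun e => ha (e ▸ hb))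
      obtain ⟨b, hb⟩ := hs
      have hbsup : b ⊆ s.sup id := Finset.le_sup (f := id) hb
      have hnesup : (s.sup id).Nonempty := (hall b (by simp [hb])).mono hbsup
      have hsub' : a ∪ s.sup id ⊆ Ti := hsup ▸ hsub
      have hih : ∑ S ∈ s, v S ≤ v (s.sup id) :=
        ih ⟨b, hb⟩ (fun S hS => hall S (by simp [hS]))
          (hdisj.subset (by simp [Finset.coe_subset]))
          (Finset.union_subset_iff.1 hsub').2
      have hlt := h a (s.sup id) (hall a (by simp)) hnesup hd hsub'
      rw [Finset.sum_insert ha, hsup]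
      linarith
    · rw [Finset.not_nonempty_iff_eq_empty.1 hs]
      simp

/-- Strict version for `2 ≤ card`. -/
lemma aux_sum_lt_sup (v : Finset N → ℝ) (Ti : Finset N)
    (h : ∀ S₁ S₂ : Finset N, S₁.Nonempty → S₂.Nonempty →
      Disjoint S₁ S₂ → S₁ ∪ S₂ ⊆ Ti → v S₁ + v S₂ < v (S₁ ∪ S₂))
    (F : Finset (Finset N)) (hcard : 2 ≤ F.card) (hall : ∀ S ∈ F, S.Nonempty)
    (hdisj : (F : Set (Finset N)).PairwiseDisjoint id) (hsub : F.sup id ⊆ Ti) :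
    ∑ S ∈ F, v S < v (F.sup id) := by
  obtain ⟨a, ha, b, hb, hab⟩ := Finset.one_lt_card.1 hcard
  set s := F.erase a with hs
  have hbs : b ∈ s := Finset.mem_erase.2 ⟨fun e => hab e.symm, hb⟩
  have hins : F = insert a s := (Finset.insert_erase ha).symm
  have has : a ∉ s := Finset.notMem_erase a F
  have hsF : s ⊆ F := Finset.erase_subset a F
  have hsup : F.sup id = a ∪ s.sup id := by
    conv_lhs => rw [hins]
    rw [Finset.sup_insert]; rfl
  have hd : Disjoint a (s.sup id) := by
    rw [Finset.disjoint_sup_right]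
    intro c hc
    exact hdisj ha (hsF hc) (fun e => has (e ▸ hc))
  have hbsup : b ⊆ s.sup id := Finset.le_sup (f := id) hbs
  have hnesup : (s.sup id).Nonempty := (hall b hb).mono hbsup
  have hsub' : a ∪ s.sup id ⊆ Ti := hsup ▸ hsub
  have hih : ∑ S ∈ s, v S ≤ v (s.sup id) :=
    aux_sum_le_sup v Ti h s ⟨b, hbs⟩ (fun S hS => hall S (hsF hS))
      (hdisj.subset (Finset.coe_subset.2 hsF)) (Finset.union_subset_iff.1 hsub').2
  have hlt := h a (s.sup id) (hall a ha) hnesup hd hsub'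
  rw [hins, Finset.sum_insert has, ← hins, hsup]
  linarith

/-- **Strict `D_c`-stability implies no applicable merge or split.** Let `v` be a TU
coalitional game on a finite nonempty player set `N` and let `T` be a partition of `N`
satisfying: (i) for each member `Ti` of `T` and each pair of disjoint nonempty coalitions
`S₁, S₂` with `S₁ ∪ S₂ ⊆ Ti`, `v (S₁ ∪ S₂) > v S₁ + v S₂`; and (ii) for every
`T`-incompatible coalition `G`, `∑_{Ti ∈ T} v (Ti ∩ G) > v G`. Then no merge rule and no
split rule is applicable to `T`. -/
theorem dc_stable_no_merge_split [Nonempty N]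
    (v : Finset N → ℝ) (hv0 : v ∅ = 0)
    (T : Finset (Finset N)) (hT : IsPartition T)
    (hcond1 : ∀ Ti ∈ T, ∀ S₁ S₂ : Finset N, S₁.Nonempty → S₂.Nonempty →
      Disjoint S₁ S₂ → S₁ ∪ S₂ ⊆ Ti → v S₁ + v S₂ < v (S₁ ∪ S₂))
    (hcond2 : ∀ G : Finset N, Incompatible T G → v G < ∑ Ti ∈ T, v (Ti ∩ G)) :
    ∀ Q : Finset (Finset N), ¬ MergeStep v T Q ∧ ¬ SplitStep v T Q := by
  obtain ⟨hTne, hTdisj, hTuniv⟩ := hT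
  intro Q
  constructor
  · rintro ⟨F, hFT, hcard, hlt, -⟩
    set U := F.sup id with hU
    -- U is incompatible
    have hinc : Incompatible T U := by
      intro Tj hTj hUsub
      obtain ⟨a, ha, b, hb, hab⟩ := Finset.one_lt_card.1 hcard
      have key : ∀ S ∈ F, S = Tj := by
        intro S hS
        by_contra hne
        have hsub : S ⊆ Tj := (Finset.le_sup (f := id) hS).trans hUsub
        exact (hTne S (hFT hS)).ne_empty
          ((hTdisj (hFT hS) hTj hne).eq_bot_of_le hsub)
      exact hab ((key a ha).trans (key b hb).symm)
    have h2 := hcond2 U hinc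
    have hsum : ∑ Ti ∈ T, v (Ti ∩ U) = ∑ S ∈ F, v S := by
      rw [← Finset.sum_subset hFT (fun Ti hTi hTiF => ?_)]
      · refine Finset.sum_congr rfl fun S hS => ?_
        congr 1
        exact Finset.inter_eq_left.2 (Finset.le_sup (f := id) hS)
      · have hd : Disjoint Ti U := by
          rw [hU, Finset.disjoint_sup_right]
          intro S hS
          exact hTdisj hTi (hFT hS) (fun e => hTiF (e ▸ hS))
        rw [Finset.disjoint_iff_inter_eq_empty.1 hd, hv0]
    rw [hsum] at h2
    linarith
  · rintro ⟨U, hUT, F, hcard, hall, hdisj, hsupF, hlt, -⟩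
    have := aux_sum_lt_sup v U (hcond1 U hUT) F hcard hall hdisj (hsupF ▸ le_rfl)
    rw [hsupF] at this
    linarith
end

section
/- Let v : Finset N → ℝ be a TU coalitional game on a finite nonempty player set N, and let T = {T₁, …, T_l} be a partition of N satisfying: (i) for each i and each pair of disjoint nonempty coalitions S₁, S₂ with S₁ ∪ S₂ ⊆ T_i, v(S₁ ∪ S₂) > v(S₁) + v(S₂); and (ii) for every T-incompatible coalition G, ∑_{i=1}^l v(T_i ∩ G) > v(G). Then T is the unique partition of N to which no merge rule and no split rule is applicable: if P is any partition of N admitting no applicable merge and no applicable split, then P = T. -/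
variable {N : Type*} [Fintype N] [DecidableEq N]

lemma sup_superadd {N : Type*} [DecidableEq N] (v : Finset N → ℝ) (Ti : Finset N)
    (h : ∀ S₁ S₂ : Finset N, S₁.Nonempty → S₂.Nonempty → Disjoint S₁ S₂ → S₁ ∪ S₂ ⊆ Ti →
      v S₁ + v S₂ < v (S₁ ∪ S₂)) :
    ∀ F : Finset (Finset N), F.Nonempty → (∀ S ∈ F, S.Nonempty) →
      (F : Set (Finset N)).PairwiseDisjoint id → F.sup id ⊆ Ti →
      (∑ S ∈ F, v S ≤ v (F.sup id)) ∧ (2 ≤ F.card → ∑ S ∈ F, v S < v (F.sup id)) := by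
  intro F
  induction F using Finset.induction_on with
  | empty => intro hne; exact absurd hne (by simp)
  | insert a F' ha ih =>
    intro _ hne hdisj hsub
    rcases F'.eq_empty_or_nonempty with rfl | hF'
    · simp
    · have hsupins : (insert a F').sup id = a ∪ F'.sup id := by
        simp [Finset.sup_insert, Finset.sup_eq_union]
      have hsup' : F'.sup id ⊆ (insert a F').sup id :=
        Finset.sup_mono (Finset.subset_insert a F')
      have hane : a.Nonempty := hne a (Finset.mem_insert_self a F')
      obtain ⟨S₀, hS₀⟩ := hF'
      have hsupne : (F'.sup id).Nonempty :=
        (hne S₀ (Finset.mem_insert_of_mem hS₀)).mono (Finset.le_sup (f := id) hS₀)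
      have hdisj' : (F' : Set (Finset N)).PairwiseDisjoint id :=
        hdisj.subset (by simp [Finset.coe_insert, Set.subset_insert])
      have hdaj : Disjoint a (F'.sup id) := by
        rw [Finset.disjoint_sup_right]
        intro S hS
        exact hdisj (by simp) (by simp [hS]) (by rintro rfl; exact ha hS)
      have hsub' : F'.sup id ⊆ Ti := le_trans hsup' hsub
      have ihc := ih ⟨S₀, hS₀⟩ (fun S hS => hne S (Finset.mem_insert_of_mem hS)) hdisj' hsub'
      have hkey : v a + v (F'.sup id) < v (a ∪ F'.sup id) :=
        h a (F'.sup id) hane hsupne hdaj (by rw [← hsupins]; exact hsub)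
      rw [Finset.sum_insert ha, hsupins]
      exact ⟨by linarith [ihc.1], fun _ => by linarith [ihc.1]⟩

/-- **A strictly `D_c`-stable partition is the unique merge-and-split terminal
partition.** Let `v` be a TU coalitional game on a finite nonempty player set `N` and
let `T` be a partition of `N` satisfying: (i) for each member `Ti` of `T` and each pair
of disjoint nonempty coalitions `S₁, S₂` with `S₁ ∪ S₂ ⊆ Ti`,
`v (S₁ ∪ S₂) > v S₁ + v S₂`; and (ii) for every `T`-incompatible coalition `G`,
`∑_{Ti ∈ T} v (Ti ∩ G) > v G`. Then `T` is the unique partition of `N` to which no merge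
rule and no split rule is applicable: any partition `P` admitting no applicable merge and
no applicable split equals `T`. -/
theorem dc_stable_unique_terminal [Nonempty N]
    (v : Finset N → ℝ) (hv0 : v ∅ = 0)
    (T : Finset (Finset N)) (hT : IsPartition T)
    (hcond1 : ∀ Ti ∈ T, ∀ S₁ S₂ : Finset N, S₁.Nonempty → S₂.Nonempty →
      Disjoint S₁ S₂ → S₁ ∪ S₂ ⊆ Ti → v S₁ + v S₂ < v (S₁ ∪ S₂))
    (hcond2 : ∀ G : Finset N, Incompatible T G → v G < ∑ Ti ∈ T, v (Ti ∩ G)) :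
    ∀ P : Finset (Finset N), IsPartition P →
      (∀ Q : Finset (Finset N), ¬ MergeStep v P Q ∧ ¬ SplitStep v P Q) →
      P = T := by
  intro P hP hno
  obtain ⟨hPne, hPdisj, hPsup⟩ := hP
  obtain ⟨hTne, hTdisj, hTsup⟩ := hT
  have hnomerge : ∀ F : Finset (Finset N), F ⊆ P → 2 ≤ F.card →
      v (F.sup id) ≤ ∑ S ∈ F, v S := by
    intro F hF hcard
    by_contra h
    exact (hno ((P \ F) ∪ {F.sup id})).1 ⟨F, hF, hcard, lt_of_not_ge h, rfl⟩
  have hnosplit : ∀ U ∈ P, ∀ F : Finset (Finset N), 2 ≤ F.card →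
      (∀ S ∈ F, S.Nonempty) → (F : Set (Finset N)).PairwiseDisjoint id →
      F.sup id = U → ∑ S ∈ F, v S ≤ v U := by
    intro U hU F hcard hne hdisj hsup
    by_contra h
    exact (hno ((P \ {U}) ∪ F)).2 ⟨U, hU, F, hcard, hne, hdisj, hsup, lt_of_not_ge h, rfl⟩
  -- Step A: every member of P is contained in some member of T
  have stepA : ∀ S ∈ P, ∃ Ti ∈ T, S ⊆ Ti := by
    intro S hS
    by_contra hcon
    push_neg at hcon
    have hlt := hcond2 S (fun Ti hTi => hcon Ti hTi)
    set T' : Finset (Finset N) := T.filter (fun Ti => (Ti ∩ S).Nonempty) with hT'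
    set F : Finset (Finset N) := T'.image (· ∩ S) with hF
    have hmemT' : ∀ Ti ∈ T', Ti ∈ T := fun Ti hTi => (Finset.mem_filter.1 hTi).1
    have hinj : ∀ Ti ∈ T', ∀ Tj ∈ T', Ti ∩ S = Tj ∩ S → Ti = Tj := by
      intro Ti hTi Tj hTj heq
      by_contra hne
      obtain ⟨x, hx⟩ := (Finset.mem_filter.1 hTi).2
      have hx2 : x ∈ Tj ∩ S := heq ▸ hx
      have hdis : Disjoint Ti Tj :=
        hTdisj (Finset.mem_coe.2 (hmemT' Ti hTi)) (Finset.mem_coe.2 (hmemT' Tj hTj)) hne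
      exact absurd (Finset.mem_inter.1 hx2).1
        (Finset.disjoint_left.1 hdis (Finset.mem_inter.1 hx).1)
    have hsumF : ∑ S' ∈ F, v S' = ∑ Ti ∈ T, v (Ti ∩ S) := by
      rw [hF, Finset.sum_image hinj, hT']
      rw [Finset.sum_filter_of_ne]
      intro Ti _ hv
      by_contra hemp
      rw [Finset.not_nonempty_iff_eq_empty.1 hemp] at hv
      exact hv hv0
    have hFne : ∀ S' ∈ F, S'.Nonempty := by
      intro S' hS'
      obtain ⟨Ti, hTi, rfl⟩ := Finset.mem_image.1 hS'
      exact (Finset.mem_filter.1 hTi).2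
    have hFdisj : (F : Set (Finset N)).PairwiseDisjoint id := by
      intro a ha b hb hab
      obtain ⟨Ti, hTi, rfl⟩ := Finset.mem_image.1 (Finset.mem_coe.1 ha)
      obtain ⟨Tj, hTj, rfl⟩ := Finset.mem_image.1 (Finset.mem_coe.1 hb)
      have hne : Ti ≠ Tj := fun h => hab (by rw [h])
      have hdis : Disjoint Ti Tj :=
        hTdisj (Finset.mem_coe.2 (hmemT' Ti hTi)) (Finset.mem_coe.2 (hmemT' Tj hTj)) hne
      exact hdis.mono (Finset.inter_subset_left) (Finset.inter_subset_left)
    have hFsup : F.sup id = S := by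
      apply Finset.Subset.antisymm
      · show F.sup id ≤ S
        apply Finset.sup_le
        intro S' hS'
        obtain ⟨Ti, _, rfl⟩ := Finset.mem_image.1 hS'
        show Ti ∩ S ⊆ S
        exact Finset.inter_subset_right
      · intro x hx
        have hxu : x ∈ T.sup id := hTsup ▸ Finset.mem_univ x
        obtain ⟨Ti, hTi, hxTi⟩ := Finset.mem_sup.1 hxu
        have hmem : Ti ∩ S ∈ F := Finset.mem_image.2
          ⟨Ti, Finset.mem_filter.2 ⟨hTi, ⟨x, Finset.mem_inter.2 ⟨hxTi, hx⟩⟩⟩, rfl⟩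
        exact Finset.mem_sup.2 ⟨Ti ∩ S, hmem, Finset.mem_inter.2 ⟨hxTi, hx⟩⟩
    have hFpos : 0 < F.card := by
      obtain ⟨x, hx⟩ := hPne S hS
      rw [← hFsup] at hx
      obtain ⟨A, hA, _⟩ := Finset.mem_sup.1 hx
      exact Finset.card_pos.2 ⟨A, hA⟩
    have hFcard : 2 ≤ F.card := by
      by_contra hc
      push_neg at hc
      have h : F.card = 1 := by omega
      · obtain ⟨A, hA⟩ := Finset.card_eq_one.1 h
        have hAS : A = S := by rw [← hFsup, hA]; simp
        have hAF : A ∈ F := by rw [hA]; simp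
        obtain ⟨Ti, hTi, hTieq⟩ := Finset.mem_image.1 hAF
        refine hcon Ti (hmemT' Ti hTi) ?_
        rw [← hAS, ← hTieq]
        exact Finset.inter_subset_left
    have := hnosplit S hS F hFcard hFne hFdisj hFsup
    rw [hsumF] at this
    linarith
  -- Step B: every member of T is in P
  have stepB : ∀ Ti ∈ T, Ti ∈ P := by
    intro Ti hTi
    set F : Finset (Finset N) := P.filter (fun S => S ⊆ Ti) with hF
    have hFP : F ⊆ P := Finset.filter_subset _ _
    have hFsup : F.sup id = Ti := by
      apply Finset.Subset.antisymm
      · show F.sup id ≤ Ti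
        exact Finset.sup_le (fun S hS => (Finset.mem_filter.1 hS).2)
      · intro x hx
        have hxu : x ∈ P.sup id := hPsup ▸ Finset.mem_univ x
        obtain ⟨S, hS, hxS⟩ := Finset.mem_sup.1 hxu
        obtain ⟨Tj, hTj, hSTj⟩ := stepA S hS
        have : Tj = Ti := by
          by_contra hne
          have hdis : Disjoint Tj Ti := hTdisj (Finset.mem_coe.2 hTj) (Finset.mem_coe.2 hTi) hne
          exact absurd hx (Finset.disjoint_left.1 hdis (hSTj hxS))
        exact Finset.mem_sup.2 ⟨S, Finset.mem_filter.2 ⟨hS, this ▸ hSTj⟩, hxS⟩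
    have hFnonempty : F.Nonempty := by
      obtain ⟨x, hx⟩ := hTne Ti hTi
      rw [← hFsup] at hx
      obtain ⟨S, hS, _⟩ := Finset.mem_sup.1 hx
      exact ⟨S, hS⟩
    have hcard : F.card = 1 := by
      have hpos := Finset.card_pos.2 hFnonempty
      rcases Nat.lt_or_ge F.card 2 with h2 | h2
      · omega
      · exfalso
        have hstrict := (sup_superadd v Ti (hcond1 Ti hTi) F hFnonempty
          (fun S hS => hPne S (hFP hS))
          (hPdisj.subset (Finset.coe_subset.2 hFP))
          (hFsup ▸ Finset.Subset.refl Ti)).2 h2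
        linarith [hnomerge F hFP h2]
    obtain ⟨S, hSeq⟩ := Finset.card_eq_one.1 hcard
    have hSP : S ∈ P := hFP (by rw [hSeq]; simp)
    have : S = Ti := by rw [← hFsup, hSeq]; simp
    exact this ▸ hSP
  -- Step C: conclude
  apply Finset.Subset.antisymm
  · intro S hS
    obtain ⟨Ti, hTi, hSTi⟩ := stepA S hS
    have hTiP := stepB Ti hTi
    have : S = Ti := by
      by_contra hne
      obtain ⟨x, hx⟩ := hPne S hS
      have hdis : Disjoint S Ti := hPdisj (Finset.mem_coe.2 hS) (Finset.mem_coe.2 hTiP) hne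
      exact absurd (hSTi hx) (Finset.disjoint_left.1 hdis hx)
    exact this ▸ hTi
  · intro Ti hTi
    exact stepB Ti hTi
end

section
/- Let v : Finset N → ℝ be a TU coalitional game on a finite nonempty player set N, and let T = {T₁, …, T_l} be a partition of N satisfying: (i) for each i and each pair of disjoint nonempty coalitions S₁, S₂ with S₁ ∪ S₂ ⊆ T_i, v(S₁ ∪ S₂) > v(S₁) + v(S₂); and (ii) for every T-incompatible coalition G, ∑_{i=1}^l v(T_i ∩ G) > v(G). Then T strictly maximizes social welfare among all partitions of N: for every partition P of N with P ≠ T, ∑_{i=1}^l v(T_i) > ∑_{S ∈ P} v(S). -/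
variable {N : Type*} [Fintype N] [DecidableEq N]

set_option linter.unusedSectionVars false


lemma sup_nonempty_of_forall {F : Finset (Finset N)} (hF : F.Nonempty)
    (h : ∀ S ∈ F, S.Nonempty) : (F.sup id).Nonempty := by
  obtain ⟨S, hS⟩ := hF
  obtain ⟨x, hx⟩ := h S hS
  exact ⟨x, Finset.mem_sup.mpr ⟨S, hS, hx⟩⟩

lemma sum_le_v_sup (v : Finset N → ℝ) (Ti : Finset N)
    (hsuper : ∀ S₁ S₂ : Finset N, S₁.Nonempty → S₂.Nonempty → Disjoint S₁ S₂ →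
      S₁ ∪ S₂ ⊆ Ti → v S₁ + v S₂ < v (S₁ ∪ S₂)) :
    ∀ F : Finset (Finset N), F.Nonempty → (∀ S ∈ F, S.Nonempty) →
      (F : Set (Finset N)).PairwiseDisjoint id → F.sup id ⊆ Ti →
      ∑ S ∈ F, v S ≤ v (F.sup id) := by
  intro F
  induction F using Finset.cons_induction with
  | empty => intro h; exact absurd h (by simp)
  | cons a s ha ih =>
    intro _ hne hpd hsub
    rcases s.eq_empty_or_nonempty with rfl | hs
    · simp
    · have hane : a.Nonempty := hne a (Finset.mem_cons_self a s)
      have hsne : ∀ S ∈ s, S.Nonempty := fun S hS => hne S (Finset.mem_cons.mpr (Or.inr hS))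
      have hpds : (s : Set (Finset N)).PairwiseDisjoint id :=
        hpd.subset (by intro x hx; simp at hx ⊢; exact Or.inr hx)
      have hsups : s.sup id ⊆ Ti := by
        have h := Finset.sup_mono (Finset.subset_cons ha) (f := id)
        exact subset_trans h hsub
      have hsup_ne : (s.sup id).Nonempty := sup_nonempty_of_forall hs hsne
      have hdisj : Disjoint a (s.sup id) := by
        rw [Finset.disjoint_sup_right]
        intro S hS
        exact hpd (Finset.mem_cons_self a s) (Finset.mem_cons.mpr (Or.inr hS))
          (fun h => ha (h ▸ hS))
      have hsupc : (Finset.cons a s ha).sup id = a ∪ s.sup id := by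
        rw [Finset.sup_cons]; rfl
      have hu : a ∪ s.sup id ⊆ Ti := hsupc ▸ hsub
      calc ∑ S ∈ Finset.cons a s ha, v S = v a + ∑ S ∈ s, v S := Finset.sum_cons ha
        _ ≤ v a + v (s.sup id) := by linarith [ih hs hsne hpds hsups]
        _ ≤ v (a ∪ s.sup id) := (hsuper a (s.sup id) hane hsup_ne hdisj hu).le
        _ = v ((Finset.cons a s ha).sup id) := by rw [hsupc]

lemma sum_lt_v_sup (v : Finset N → ℝ) (Ti : Finset N)
    (hsuper : ∀ S₁ S₂ : Finset N, S₁.Nonempty → S₂.Nonempty → Disjoint S₁ S₂ →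
      S₁ ∪ S₂ ⊆ Ti → v S₁ + v S₂ < v (S₁ ∪ S₂))
    (F : Finset (Finset N)) (hcard : 2 ≤ F.card) (hne : ∀ S ∈ F, S.Nonempty)
    (hpd : (F : Set (Finset N)).PairwiseDisjoint id) (hsub : F.sup id ⊆ Ti) :
    ∑ S ∈ F, v S < v (F.sup id) := by
  obtain ⟨a, haF⟩ := Finset.card_pos.mp (by omega : 0 < F.card)
  set s := F.erase a with hsdef
  have hins : F = insert a s := by rw [hsdef, Finset.insert_erase haF]
  have has : a ∉ s := Finset.notMem_erase a F
  have hs : s.Nonempty := by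
    rw [← Finset.card_pos, Finset.card_erase_of_mem haF]; omega
  have hsne : ∀ S ∈ s, S.Nonempty := fun S hS => hne S (Finset.mem_of_mem_erase hS)
  have hpds : (s : Set (Finset N)).PairwiseDisjoint id :=
    hpd.subset (by intro x hx; exact Finset.mem_of_mem_erase hx)
  have hsupc : F.sup id = a ∪ s.sup id := by
    conv_lhs => rw [hins]
    rw [Finset.sup_insert]; rfl
  have hsups : s.sup id ⊆ Ti := by
    have h := Finset.sup_mono (Finset.erase_subset a F) (f := id)
    exact subset_trans h hsub
  have hdisj : Disjoint a (s.sup id) := by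
    rw [Finset.disjoint_sup_right]
    intro S hS
    exact hpd haF (Finset.mem_of_mem_erase hS) (fun h => has (h ▸ hS))
  have hu : a ∪ s.sup id ⊆ Ti := hsupc ▸ hsub
  have h1 : ∑ S ∈ s, v S ≤ v (s.sup id) := sum_le_v_sup v Ti hsuper s hs hsne hpds hsups
  have h2 : v a + v (s.sup id) < v (a ∪ s.sup id) :=
    hsuper a (s.sup id) (hne a haF) (sup_nonempty_of_forall hs hsne) hdisj hu
  have h3 : ∑ S ∈ F, v S = v a + ∑ S ∈ s, v S := by
    rw [hins, Finset.sum_insert has]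
  rw [h3, hsupc]; linarith


/-- **A strictly `D_c`-stable partition strictly maximizes social welfare.** Let `v` be a
TU coalitional game on a finite nonempty player set `N` and let `T` be a partition of `N`
satisfying: (i) for each member `Ti` of `T` and each pair of disjoint nonempty coalitions
`S₁, S₂` with `S₁ ∪ S₂ ⊆ Ti`, `v (S₁ ∪ S₂) > v S₁ + v S₂`; and (ii) for every
`T`-incompatible coalition `G`, `∑_{Ti ∈ T} v (Ti ∩ G) > v G`. Then for every partition
`P` of `N` with `P ≠ T`, `∑_{Ti ∈ T} v Ti > ∑_{S ∈ P} v S`. -/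
theorem dc_stable_maximizes_welfare [Nonempty N]
    (v : Finset N → ℝ) (hv0 : v ∅ = 0)
    (T : Finset (Finset N)) (hT : IsPartition T)
    (hcond1 : ∀ Ti ∈ T, ∀ S₁ S₂ : Finset N, S₁.Nonempty → S₂.Nonempty →
      Disjoint S₁ S₂ → S₁ ∪ S₂ ⊆ Ti → v S₁ + v S₂ < v (S₁ ∪ S₂))
    (hcond2 : ∀ G : Finset N, Incompatible T G → v G < ∑ Ti ∈ T, v (Ti ∩ G)) :
    ∀ P : Finset (Finset N), IsPartition P → P ≠ T →
      ∑ S ∈ P, v S < ∑ Ti ∈ T, v Ti := by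
  classical
  intro P hP hPT
  obtain ⟨hPne, hPpd, hPsup⟩ := hP
  obtain ⟨hTne, hTpd, hTsup⟩ := hT
  -- every player lies in some member of P
  have hPmem : ∀ x : N, ∃ S ∈ P, x ∈ S := by
    intro x
    have : x ∈ P.sup id := hPsup ▸ Finset.mem_univ x
    exact Finset.mem_sup.mp this
  have hTmem : ∀ x : N, ∃ Ti ∈ T, x ∈ Ti := by
    intro x
    have : x ∈ T.sup id := hTsup ▸ Finset.mem_univ x
    exact Finset.mem_sup.mp this
  -- step 1: per-element comparison v S vs ∑ Ti, v (Ti ∩ S) for compatible S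
  have heqS : ∀ S ∈ P, ¬ Incompatible T S → ∑ Ti ∈ T, v (Ti ∩ S) = v S := by
    intro S hS hcomp
    have : ∃ Tj ∈ T, S ⊆ Tj := by
      unfold Incompatible at hcomp; push_neg at hcomp; exact hcomp
    obtain ⟨Tj, hTj, hsub⟩ := this
    rw [Finset.sum_eq_single Tj]
    · rw [Finset.inter_eq_right.mpr hsub]
    · intro Ti hTi hneq
      have hd : Disjoint Ti Tj := hTpd hTi hTj hneq
      have : Ti ∩ S = ∅ := by
        apply Finset.eq_empty_of_forall_notMem
        intro x hx
        have hx1 : x ∈ Ti := (Finset.mem_inter.mp hx).1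
        have hx2 : x ∈ Tj := hsub (Finset.mem_inter.mp hx).2
        exact (Finset.disjoint_left.mp hd) hx1 hx2
      rw [this, hv0]
    · intro h; exact absurd hTj h
  have hleS : ∀ S ∈ P, v S ≤ ∑ Ti ∈ T, v (Ti ∩ S) := by
    intro S hS
    by_cases hc : Incompatible T S
    · exact (hcond2 S hc).le
    · exact (heqS S hS hc).ge
  -- step 2: per-Ti comparison
  have keyTi : ∀ Ti ∈ T,
      (∑ S ∈ P, v (Ti ∩ S) ≤ v Ti) ∧
      (∀ S₁ ∈ P, ∀ S₂ ∈ P, S₁ ≠ S₂ → (Ti ∩ S₁).Nonempty → (Ti ∩ S₂).Nonempty →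
        ∑ S ∈ P, v (Ti ∩ S) < v Ti) := by
    intro Ti hTi
    let Q := P.filter (fun S => (Ti ∩ S).Nonempty)
    let F := Q.image (fun S => Ti ∩ S)
    have hmemF : ∀ G, G ∈ F ↔ ∃ S ∈ P, (Ti ∩ S).Nonempty ∧ Ti ∩ S = G := by
      intro G
      constructor
      · intro hG
        obtain ⟨S, hS, rfl⟩ := Finset.mem_image.mp hG
        exact ⟨S, (Finset.mem_filter.mp hS).1, (Finset.mem_filter.mp hS).2, rfl⟩
      · rintro ⟨S, hS, hne, rfl⟩
        exact Finset.mem_image_of_mem _ (Finset.mem_filter.mpr ⟨hS, hne⟩)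
    -- distinct members of Q give distinct intersections
    have hinj : ∀ S₁ ∈ P, ∀ S₂ ∈ P, S₁ ≠ S₂ → (Ti ∩ S₁).Nonempty →
        Ti ∩ S₁ ≠ Ti ∩ S₂ := by
      intro S₁ h₁ S₂ h₂ hne hne1 heq
      have hd : Disjoint S₁ S₂ := hPpd h₁ h₂ hne
      obtain ⟨x, hx⟩ := hne1
      have hx2 : x ∈ Ti ∩ S₂ := heq ▸ hx
      exact (Finset.disjoint_left.mp hd) (Finset.mem_inter.mp hx).2
        (Finset.mem_inter.mp hx2).2
    have hsum : ∑ S ∈ P, v (Ti ∩ S) = ∑ G ∈ F, v G := by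
      have h1 : ∑ S ∈ P, v (Ti ∩ S) = ∑ S ∈ Q, v (Ti ∩ S) := by
        refine (Finset.sum_subset (Finset.filter_subset _ _) ?_).symm
        intro S hS hnS
        have hnn : ¬ (Ti ∩ S).Nonempty := fun h => hnS (Finset.mem_filter.mpr ⟨hS, h⟩)
        rw [Finset.not_nonempty_iff_eq_empty.mp hnn, hv0]
      have h2 : ∑ G ∈ F, v G = ∑ S ∈ Q, v (Ti ∩ S) := by
        refine Finset.sum_image ?_
        intro S₁ h₁ S₂ h₂ heq
        by_contra hne
        exact hinj S₁ (Finset.mem_of_mem_filter S₁ h₁) S₂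
          (Finset.mem_of_mem_filter S₂ h₂) hne
          (Finset.mem_filter.mp h₁).2 heq
      rw [h1, h2]
    have hFne' : ∀ G ∈ F, G.Nonempty := by
      intro G hG
      obtain ⟨S, hS, hne, rfl⟩ := (hmemF G).mp hG
      exact hne
    have hFpd : (F : Set (Finset N)).PairwiseDisjoint id := by
      intro G₁ h₁ G₂ h₂ hne
      obtain ⟨S₁, hS₁, hne₁, rfl⟩ := (hmemF G₁).mp (Finset.mem_coe.mp h₁)
      obtain ⟨S₂, hS₂, hne₂, rfl⟩ := (hmemF G₂).mp (Finset.mem_coe.mp h₂)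
      have hSne : S₁ ≠ S₂ := fun h => hne (by rw [h])
      have hd : Disjoint S₁ S₂ := hPpd hS₁ hS₂ hSne
      exact Finset.disjoint_left.mpr (fun x hx1 hx2 =>
        (Finset.disjoint_left.mp hd) (Finset.mem_inter.mp hx1).2
          (Finset.mem_inter.mp hx2).2)
    have hFsub : F.sup id ⊆ Ti := by
      intro x hx
      obtain ⟨G, hG, hxG⟩ := Finset.mem_sup.mp hx
      obtain ⟨S, hS, hne, rfl⟩ := (hmemF G).mp hG
      exact (Finset.mem_inter.mp hxG).1
    have hFsupTi : F.sup id = Ti := by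
      apply Finset.Subset.antisymm hFsub
      intro x hx
      obtain ⟨S, hS, hxS⟩ := hPmem x
      have hxTS : x ∈ Ti ∩ S := Finset.mem_inter.mpr ⟨hx, hxS⟩
      exact Finset.mem_sup.mpr ⟨Ti ∩ S, (hmemF _).mpr ⟨S, hS, ⟨x, hxTS⟩, rfl⟩, hxTS⟩
    have hFne : F.Nonempty := by
      obtain ⟨x, hx⟩ := hTne Ti hTi
      obtain ⟨S, hS, hxS⟩ := hPmem x
      exact ⟨Ti ∩ S, (hmemF _).mpr ⟨S, hS, ⟨x, Finset.mem_inter.mpr ⟨hx, hxS⟩⟩, rfl⟩⟩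
    constructor
    · rw [hsum, ← hFsupTi]
      exact sum_le_v_sup v Ti (hcond1 Ti hTi) F hFne hFne' hFpd (hFsupTi ▸ hFsub)
    · intro S₁ h₁ S₂ h₂ hne hne1 hne2
      have hG1 : Ti ∩ S₁ ∈ F := (hmemF _).mpr ⟨S₁, h₁, hne1, rfl⟩
      have hG2 : Ti ∩ S₂ ∈ F := (hmemF _).mpr ⟨S₂, h₂, hne2, rfl⟩
      have hcard : 2 ≤ F.card := by
        apply Finset.one_lt_card.mpr
        exact ⟨Ti ∩ S₁, hG1, Ti ∩ S₂, hG2, hinj S₁ h₁ S₂ h₂ hne hne1⟩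
      rw [hsum, ← hFsupTi]
      exact sum_lt_v_sup v Ti (hcond1 Ti hTi) F hcard hFne' hFpd (hFsupTi ▸ hFsub)
  have hstep2le : ∑ S ∈ P, ∑ Ti ∈ T, v (Ti ∩ S) ≤ ∑ Ti ∈ T, v Ti := by
    rw [Finset.sum_comm]
    exact Finset.sum_le_sum (fun Ti hTi => (keyTi Ti hTi).1)
  by_cases hinc : ∃ S ∈ P, Incompatible T S
  · obtain ⟨S₀, hS₀, hS₀inc⟩ := hinc
    have h1 : ∑ S ∈ P, v S < ∑ S ∈ P, ∑ Ti ∈ T, v (Ti ∩ S) :=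
      Finset.sum_lt_sum hleS ⟨S₀, hS₀, hcond2 S₀ hS₀inc⟩
    linarith
  · push_neg at hinc
    have h1 : ∑ S ∈ P, v S = ∑ S ∈ P, ∑ Ti ∈ T, v (Ti ∩ S) :=
      (Finset.sum_congr rfl (fun S hS => heqS S hS (hinc S hS))).symm
    -- find Ti hit by two distinct members of P
    have hwit : ∃ Ti ∈ T, ∃ S₁ ∈ P, ∃ S₂ ∈ P, S₁ ≠ S₂ ∧ (Ti ∩ S₁).Nonempty ∧
        (Ti ∩ S₂).Nonempty := by
      by_contra hno
      push_neg at hno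
      apply hPT
      -- each Ti is hit by at most one member, so P = T
      have hTsubP : ∀ Ti ∈ T, Ti ∈ P := by
        intro Ti hTi
        obtain ⟨x, hx⟩ := hTne Ti hTi
        obtain ⟨S, hS, hxS⟩ := hPmem x
        have hTiS : Ti ⊆ S := by
          intro y hy
          obtain ⟨S', hS', hyS'⟩ := hPmem y
          by_cases hSS : S = S'
          · exact hSS ▸ hyS'
          · exact absurd (hno Ti hTi S hS S' hS' hSS ⟨x, Finset.mem_inter.mpr ⟨hx, hxS⟩⟩)
              (Finset.nonempty_iff_ne_empty.mp (⟨y, Finset.mem_inter.mpr ⟨hy, hyS'⟩⟩ : (Ti ∩ S').Nonempty))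
        have hScomp : ∃ Tj ∈ T, S ⊆ Tj := by
          have := hinc S hS; unfold Incompatible at this; push_neg at this
          exact this
        obtain ⟨Tj, hTj, hSTj⟩ := hScomp
        have hTieq : Ti = Tj := by
          by_contra hne
          have hd : Disjoint Ti Tj := hTpd hTi hTj hne
          exact (Finset.disjoint_left.mp hd) hx (hSTj (hTiS hx))
        have : S = Ti := Finset.Subset.antisymm (hTieq ▸ hSTj) hTiS
        exact this ▸ hS
      apply Finset.Subset.antisymm
      · intro S hS
        have hScomp : ∃ Tj ∈ T, S ⊆ Tj := by
          have := hinc S hS; unfold Incompatible at this; push_neg at this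
          exact this
        obtain ⟨Tj, hTj, hSTj⟩ := hScomp
        have hTjP : Tj ∈ P := hTsubP Tj hTj
        have : S = Tj := by
          by_contra hne
          have hd : Disjoint S Tj := hPpd hS hTjP hne
          obtain ⟨x, hx⟩ := hPne S hS
          exact (Finset.disjoint_left.mp hd) hx (hSTj hx)
        exact this ▸ hTj
      · intro Ti hTi; exact hTsubP Ti hTi
    obtain ⟨Ti₀, hTi₀, S₁, h₁, S₂, h₂, hne, hne1, hne2⟩ := hwit
    have h2 : ∑ Ti ∈ T, ∑ S ∈ P, v (Ti ∩ S) < ∑ Ti ∈ T, v Ti :=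
      Finset.sum_lt_sum (fun Ti hTi => (keyTi Ti hTi).1)
        ⟨Ti₀, hTi₀, (keyTi Ti₀ hTi₀).2 S₁ h₁ S₂ h₂ hne hne1 hne2⟩
    rw [h1, Finset.sum_comm]
    exact h2
end
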